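/- Under the continuity assumption on r and P^0, for every ε > 0 there exists N(ε) such that for all N > N(ε), any mean-field policy π* optimal for the mean-field control problem (i.e., J(π*) = sup_{π∈Π} J(π)) is ε-Pareto optimal in the N-agent problem: J^N(π^N(π*)) ≥ sup_{(π^1,…,π^N) ∈ Π_N^N} J^N(π^1,…,π^N) − ε. -/

import Mathlib

open Finset Filter Topology

section MFC

variable {X U X0 : Type*} [Fintype X] [Fintype U] [Fintype X0]

/-- The state-action distribution `G(μ,h)(x,u) = h(x)(u)·μ(x)` induced by a state
distribution `μ` and a decision rule `h ∈ 𝓗 = {h : X → 𝒫(U)}`. -/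
noncomputable def jointG (μ : ↥(stdSimplex ℝ X)) (h : X → ↥(stdSimplex ℝ U)) :
    ↥(stdSimplex ℝ (X × U)) :=
  ⟨fun p => (h p.1).1 p.2 * μ.1 p.1,
   ⟨fun p => mul_nonneg ((h p.1).2.1 p.2) (μ.2.1 p.1), by
    calc ∑ p : X × U, (h p.1).1 p.2 * μ.1 p.1
        = ∑ x : X, ∑ u : U, (h x).1 u * μ.1 x := by rw [Fintype.sum_prod_type]
      _ = ∑ x : X, (∑ u : U, (h x).1 u) * μ.1 x := by
          simp [Finset.sum_mul]
      _ = 1 := by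
          simp only [fun x : X => (h x).2.2, one_mul]
          exact μ.2.2⟩⟩

/-- The (deterministic) empirical state-action distribution of the `N+1` sampled
state-action pairs `s i ∈ X × U`. -/
noncomputable def empDist [DecidableEq X] [DecidableEq U] (N : ℕ) (s : Fin (N + 1) → X × U) :
    ↥(stdSimplex ℝ (X × U)) :=
  ⟨fun p => (∑ i, if s i = p then (1 : ℝ) else 0) / (N + 1),
   ⟨fun p => div_nonneg (Finset.sum_nonneg fun i _ => by positivity) (by positivity), by
    rw [← Finset.sum_div, Finset.sum_comm]
    simp only [Finset.sum_ite_eq, Finset.mem_univ, if_true, Finset.sum_const,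
      Finset.card_univ, Fintype.card_fin, nsmul_eq_mul, mul_one]
    rw [Nat.cast_add, Nat.cast_one, div_self (by positivity)]⟩⟩

/-- The probability that the `N+1` agents, with states drawn i.i.d. from `μ0` and actions
drawn conditionally independently from the decision rules `d i`, sample exactly the
state-action pairs `s i`. -/
noncomputable def sampleWeight (N : ℕ) (μ0 : ↥(stdSimplex ℝ X))
    (d : Fin (N + 1) → X → ↥(stdSimplex ℝ U)) (s : Fin (N + 1) → X × U) : ℝ :=
  ∏ i, μ0.1 (s i).1 * (d i (s i).1).1 (s i).2

/-- The expectation `E[f(𝔾^N)]` of a function `f` of the random empirical state-action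
distribution `𝔾^N ~ 𝒢^N(μ0, (d¹,…,d^{N+1}))`. -/
noncomputable def empExp [DecidableEq X] [DecidableEq U] (N : ℕ) (μ0 : ↥(stdSimplex ℝ X))
    (d : Fin (N + 1) → X → ↥(stdSimplex ℝ U))
    (f : ↥(stdSimplex ℝ (X × U)) → ℝ) : ℝ :=
  ∑ s : Fin (N + 1) → X × U, sampleWeight N μ0 d s * f (empDist N s)

/-- The law of the environment state `x^{0,N}_t` of the `(N+1)`-agent system under the
policy tuple `πv`, with agent states resampled i.i.d. from `μ0` at every step. -/
noncomputable def envLawN [DecidableEq X] [DecidableEq U] (N : ℕ) (μ0 : ↥(stdSimplex ℝ X))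
    (μ00 : ↥(stdSimplex ℝ X0))
    (P0 : X0 → ↥(stdSimplex ℝ (X × U)) → ↥(stdSimplex ℝ X0))
    (πv : Fin (N + 1) → ℕ → X0 → X → ↥(stdSimplex ℝ U)) : ℕ → X0 → ℝ
  | 0 => fun y => μ00.1 y
  | t + 1 => fun y => ∑ x0 : X0, envLawN N μ0 μ00 P0 πv t x0 *
      empExp N μ0 (fun i => πv i t x0) (fun G => (P0 x0 G).1 y)

/-- The `(N+1)`-agent objective `J^N(π¹,…,π^{N+1}) = E[∑ₜ γᵗ r(x^{0,N}_t, 𝔾^N_t)]`. -/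
noncomputable def JN [DecidableEq X] [DecidableEq U] (N : ℕ) (μ0 : ↥(stdSimplex ℝ X))
    (μ00 : ↥(stdSimplex ℝ X0))
    (P0 : X0 → ↥(stdSimplex ℝ (X × U)) → ↥(stdSimplex ℝ X0))
    (r : X0 → ↥(stdSimplex ℝ (X × U)) → ℝ) (γ : ℝ)
    (πv : Fin (N + 1) → ℕ → X0 → X → ↥(stdSimplex ℝ U)) : ℝ :=
  ∑' t : ℕ, γ ^ t * ∑ x0 : X0, envLawN N μ0 μ00 P0 πv t x0 *
      empExp N μ0 (fun i => πv i t x0) (fun G => r x0 G)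

/-- The law of the mean-field environment state `x^0_t` under the mean-field policy `π`. -/
noncomputable def envLawMF (μ0 : ↥(stdSimplex ℝ X)) (μ00 : ↥(stdSimplex ℝ X0))
    (P0 : X0 → ↥(stdSimplex ℝ (X × U)) → ↥(stdSimplex ℝ X0))
    (π : ℕ → X0 → X → ↥(stdSimplex ℝ U)) : ℕ → X0 → ℝ
  | 0 => fun y => μ00.1 y
  | t + 1 => fun y => ∑ x0 : X0, envLawMF μ0 μ00 P0 π t x0 *
      (P0 x0 (jointG μ0 (π t x0))).1 y

/-- The mean-field objective `J(π) = E[∑ₜ γᵗ r(x^0_t, G(μ0, π_t(x^0_t)))]`. -/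
noncomputable def JMF (μ0 : ↥(stdSimplex ℝ X)) (μ00 : ↥(stdSimplex ℝ X0))
    (P0 : X0 → ↥(stdSimplex ℝ (X × U)) → ↥(stdSimplex ℝ X0))
    (r : X0 → ↥(stdSimplex ℝ (X × U)) → ℝ) (γ : ℝ)
    (π : ℕ → X0 → X → ↥(stdSimplex ℝ U)) : ℝ :=
  ∑' t : ℕ, γ ^ t * ∑ x0 : X0, envLawMF μ0 μ00 P0 π t x0 * r x0 (jointG μ0 (π t x0))

end MFC

set_option linter.unusedSectionVars false
set_option linter.unusedVariables false

section Moments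
variable {A : Type*} [Fintype A]

lemma momentA {n : ℕ} (w : Fin n → A → ℝ) (hw : ∀ j, ∑ a, w j a = 1) (i : Fin n)
    (g : A → ℝ) :
    ∑ s : Fin n → A, (∏ j, w j (s j)) * g (s i) = ∑ a, w i a * g a := by
  have h1 : ∀ s : Fin n → A, (∏ j, w j (s j)) * g (s i)
      = ∏ j, (w j (s j) * if j = i then g (s j) else 1) := by
    intro s
    rw [Finset.prod_mul_distrib, Fintype.prod_ite_eq' i (fun j => g (s j))]
  simp_rw [h1]
  rw [← Fintype.prod_sum (fun j a => w j a * if j = i then g a else 1)]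
  have h2 : ∀ j : Fin n, (∑ a, w j a * if j = i then g a else 1)
      = if j = i then ∑ a, w i a * g a else 1 := by
    intro j
    by_cases h : j = i
    · subst h; simp
    · simp [h, hw j]
  simp_rw [h2]
  exact Fintype.prod_ite_eq' i _

lemma momentB {n : ℕ} (w : Fin n → A → ℝ) (hw : ∀ j, ∑ a, w j a = 1) (i j : Fin n)
    (hij : i ≠ j) (g h : A → ℝ) :
    ∑ s : Fin n → A, (∏ k, w k (s k)) * g (s i) * h (s j)
      = (∑ a, w i a * g a) * (∑ a, w j a * h a) := by
  have h1 : ∀ s : Fin n → A, (∏ k, w k (s k)) * g (s i) * h (s j)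
      = ∏ k, (w k (s k) * (if k = i then g (s k) else 1) * (if k = j then h (s k) else 1)) := by
    intro s
    rw [Finset.prod_mul_distrib, Finset.prod_mul_distrib,
      Fintype.prod_ite_eq' i (fun k => g (s k)), Fintype.prod_ite_eq' j (fun k => h (s k))]
  simp_rw [h1]
  rw [← Fintype.prod_sum (fun k a => w k a * (if k = i then g a else 1) * (if k = j then h a else 1))]
  have h2 : ∀ k : Fin n, (∑ a, w k a * (if k = i then g a else 1) * (if k = j then h a else 1))
      = (if k = i then ∑ a, w i a * g a else 1) * (if k = j then ∑ a, w j a * h a else 1) := by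
    intro k
    by_cases h3 : k = i
    · subst h3; simp [hij]
    · by_cases h4 : k = j
      · subst h4; simp [h3, hw]
      · simp [h3, h4, hw k]
  simp_rw [h2]
  rw [Finset.prod_mul_distrib, Fintype.prod_ite_eq' i _, Fintype.prod_ite_eq' j _]
end Moments

section Aux
variable {X U X0 : Type*} [Fintype X] [Fintype U] [Fintype X0]
variable [DecidableEq X] [DecidableEq U]

/-- Average of `N+1` decision rules. -/
noncomputable def avgRule (N : ℕ) (d : Fin (N + 1) → X → ↥(stdSimplex ℝ U)) :
    X → ↥(stdSimplex ℝ U) := fun x =>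
  ⟨fun u => (∑ i, (d i x).1 u) / (N + 1),
   ⟨fun u => div_nonneg (Finset.sum_nonneg fun i _ => (d i x).2.1 u) (by positivity), by
     rw [← Finset.sum_div, Finset.sum_comm]
     simp only [fun i : Fin (N + 1) => (d i x).2.2, Finset.sum_const, Finset.card_univ,
       Fintype.card_fin, nsmul_eq_mul, mul_one]
     rw [Nat.cast_add, Nat.cast_one, div_self (by positivity)]⟩⟩

variable (μ0 : ↥(stdSimplex ℝ X))

lemma sum_w (h : X → ↥(stdSimplex ℝ U)) :
    ∑ p : X × U, μ0.1 p.1 * (h p.1).1 p.2 = 1 := by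
  calc ∑ p : X × U, μ0.1 p.1 * (h p.1).1 p.2
      = ∑ p : X × U, (h p.1).1 p.2 * μ0.1 p.1 := by simp_rw [mul_comm]
    _ = 1 := (jointG μ0 h).2.2

lemma w_nonneg (h : X → ↥(stdSimplex ℝ U)) (p : X × U) :
    0 ≤ μ0.1 p.1 * (h p.1).1 p.2 :=
  mul_nonneg (μ0.2.1 p.1) ((h p.1).2.1 p.2)

lemma sampleWeight_nonneg {N : ℕ} (d : Fin (N + 1) → X → ↥(stdSimplex ℝ U))
    (s : Fin (N + 1) → X × U) : 0 ≤ sampleWeight N μ0 d s :=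
  Finset.prod_nonneg fun i _ => w_nonneg μ0 (d i) (s i)

lemma sum_sampleWeight {N : ℕ} (d : Fin (N + 1) → X → ↥(stdSimplex ℝ U)) :
    ∑ s : Fin (N + 1) → X × U, sampleWeight N μ0 d s = 1 := by
  have := momentA (fun (i : Fin (N + 1)) (q : X × U) => μ0.1 q.1 * (d i q.1).1 q.2)
    (fun j => sum_w μ0 (d j)) 0 (fun _ => (1 : ℝ))
  simpa [sampleWeight, sum_w μ0] using this

lemma jointG_avgRule {N : ℕ} (d : Fin (N + 1) → X → ↥(stdSimplex ℝ U)) (p : X × U) :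
    (jointG μ0 (avgRule N d)).1 p = (∑ i, μ0.1 p.1 * (d i p.1).1 p.2) / (N + 1) := by
  show ((∑ i, (d i p.1).1 p.2) / (N + 1)) * μ0.1 p.1 = _
  rw [div_mul_eq_mul_div, Finset.sum_mul]
  exact congrArg (· / ((N : ℝ) + 1)) (Finset.sum_congr rfl fun i _ => mul_comm _ _)

lemma empExp_mean {N : ℕ} (d : Fin (N + 1) → X → ↥(stdSimplex ℝ U)) (p : X × U) :
    ∑ s : Fin (N + 1) → X × U, sampleWeight N μ0 d s * (empDist N s).1 p
      = (jointG μ0 (avgRule N d)).1 p := by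
  have key : ∀ i : Fin (N + 1),
      ∑ s : Fin (N + 1) → X × U, sampleWeight N μ0 d s * (if s i = p then (1 : ℝ) else 0)
        = μ0.1 p.1 * (d i p.1).1 p.2 := by
    intro i
    have := momentA (fun i q => μ0.1 q.1 * (d i q.1).1 q.2)
      (fun j => sum_w μ0 (d j)) i (fun a => if a = p then (1 : ℝ) else 0)
    simpa [sampleWeight, mul_ite, mul_one, mul_zero] using this
  have e1 : ∀ s : Fin (N + 1) → X × U, sampleWeight N μ0 d s * (empDist N s).1 p
      = (∑ i, sampleWeight N μ0 d s * (if s i = p then (1 : ℝ) else 0)) / (N + 1) := by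
    intro s
    rw [show (empDist N s).1 p = (∑ i, if s i = p then (1 : ℝ) else 0) / (N + 1) from rfl,
      ← mul_div_assoc, Finset.mul_sum]
  simp_rw [e1]
  rw [← Finset.sum_div, Finset.sum_comm, jointG_avgRule]
  simp_rw [key]


lemma single_w_le_one {N : ℕ} (d : Fin (N + 1) → X → ↥(stdSimplex ℝ U)) (i : Fin (N + 1))
    (p : X × U) : μ0.1 p.1 * (d i p.1).1 p.2 ≤ 1 := by
  have h := Finset.single_le_sum (f := fun q : X × U => μ0.1 q.1 * (d i q.1).1 q.2)
    (fun q _ => w_nonneg μ0 (d i) q) (Finset.mem_univ p)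
  rwa [sum_w μ0 (d i)] at h

lemma empExp_var {N : ℕ} (d : Fin (N + 1) → X → ↥(stdSimplex ℝ U)) (p : X × U) :
    ∑ s : Fin (N + 1) → X × U,
      sampleWeight N μ0 d s * ((empDist N s).1 p - (jointG μ0 (avgRule N d)).1 p) ^ 2
      ≤ 1 / ((N : ℝ) + 1) := by
  set c : ℝ := (N : ℝ) + 1 with hc
  have hc0 : (0 : ℝ) < c := by positivity
  set W : ℝ := ∑ i : Fin (N + 1), μ0.1 p.1 * (d i p.1).1 p.2 with hW
  have hbW : (jointG μ0 (avgRule N d)).1 p = W / c := jointG_avgRule μ0 d p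
  -- pairwise moments
  have hij : ∀ i j : Fin (N + 1),
      (∑ s : Fin (N + 1) → X × U, sampleWeight N μ0 d s * (if s i = p then (1 : ℝ) else 0)
        * (if s j = p then (1 : ℝ) else 0))
      = if i = j then μ0.1 p.1 * (d i p.1).1 p.2
        else (μ0.1 p.1 * (d i p.1).1 p.2) * (μ0.1 p.1 * (d j p.1).1 p.2) := by
    intro i j
    by_cases h : i = j
    · subst h
      have e : ∀ s : Fin (N + 1) → X × U,
          sampleWeight N μ0 d s * (if s i = p then (1 : ℝ) else 0)
            * (if s i = p then (1 : ℝ) else 0)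
          = sampleWeight N μ0 d s * (if s i = p then (1 : ℝ) else 0) := by
        intro s; by_cases hs : s i = p <;> simp [hs]
      simp_rw [e]
      have := momentA (fun (k : Fin (N + 1)) (q : X × U) => μ0.1 q.1 * (d k q.1).1 q.2)
        (fun k => sum_w μ0 (d k)) i (fun a => if a = p then (1 : ℝ) else 0)
      simpa [sampleWeight, mul_ite, mul_one, mul_zero] using this
    · have := momentB (fun (k : Fin (N + 1)) (q : X × U) => μ0.1 q.1 * (d k q.1).1 q.2)
        (fun k => sum_w μ0 (d k)) i j h (fun a => if a = p then (1 : ℝ) else 0)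
        (fun a => if a = p then (1 : ℝ) else 0)
      simpa [sampleWeight, h, mul_ite, mul_one, mul_zero] using this
  -- second moment identity
  have ha2 : ∀ s : Fin (N + 1) → X × U, ((empDist N s).1 p) ^ 2
      = (∑ i, ∑ j, (if s i = p then (1 : ℝ) else 0) * (if s j = p then (1 : ℝ) else 0)) / c ^ 2 := by
    intro s
    rw [show (empDist N s).1 p = (∑ i, if s i = p then (1 : ℝ) else 0) / c from rfl, div_pow]
    congr 1
    rw [sq, Finset.sum_mul_sum]
  have hE2 : ∑ s : Fin (N + 1) → X × U, sampleWeight N μ0 d s * ((empDist N s).1 p) ^ 2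
      = (∑ i, ∑ j, if i = j then μ0.1 p.1 * (d i p.1).1 p.2
          else (μ0.1 p.1 * (d i p.1).1 p.2) * (μ0.1 p.1 * (d j p.1).1 p.2)) / c ^ 2 := by
    have e : ∀ s : Fin (N + 1) → X × U, sampleWeight N μ0 d s
        * ((∑ i, ∑ j, (if s i = p then (1 : ℝ) else 0) * (if s j = p then (1 : ℝ) else 0)) / c ^ 2)
        = (∑ i, ∑ j, sampleWeight N μ0 d s * (if s i = p then (1 : ℝ) else 0)
            * (if s j = p then (1 : ℝ) else 0)) / c ^ 2 := by
      intro s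
      rw [← mul_div_assoc]
      congr 1
      rw [Finset.mul_sum]
      refine Finset.sum_congr rfl fun i _ => ?_
      rw [Finset.mul_sum]
      exact Finset.sum_congr rfl fun j _ => by ring
    simp_rw [ha2, e]
    rw [← Finset.sum_div]
    congr 1
    rw [Finset.sum_comm]
    refine Finset.sum_congr rfl fun i _ => ?_
    rw [Finset.sum_comm]
    exact Finset.sum_congr rfl fun j _ => hij i j
  -- bound for the double sum
  have hD : (∑ i : Fin (N + 1), ∑ j : Fin (N + 1), if i = j then μ0.1 p.1 * (d i p.1).1 p.2
      else (μ0.1 p.1 * (d i p.1).1 p.2) * (μ0.1 p.1 * (d j p.1).1 p.2)) ≤ W * W + c := by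
    have step : ∀ i j : Fin (N + 1), (if i = j then μ0.1 p.1 * (d i p.1).1 p.2
        else (μ0.1 p.1 * (d i p.1).1 p.2) * (μ0.1 p.1 * (d j p.1).1 p.2))
        ≤ (μ0.1 p.1 * (d i p.1).1 p.2) * (μ0.1 p.1 * (d j p.1).1 p.2)
          + (if i = j then μ0.1 p.1 * (d i p.1).1 p.2 else 0) := by
      intro i j
      by_cases h : i = j
      · subst h
        simp only [if_true, eq_self_iff_true]
        nlinarith [w_nonneg μ0 (d i) p]
      · simp [h]
    calc (∑ i : Fin (N + 1), ∑ j : Fin (N + 1), if i = j then μ0.1 p.1 * (d i p.1).1 p.2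
          else (μ0.1 p.1 * (d i p.1).1 p.2) * (μ0.1 p.1 * (d j p.1).1 p.2))
        ≤ ∑ i : Fin (N + 1), ∑ j : Fin (N + 1),
            ((μ0.1 p.1 * (d i p.1).1 p.2) * (μ0.1 p.1 * (d j p.1).1 p.2)
              + (if i = j then μ0.1 p.1 * (d i p.1).1 p.2 else 0)) :=
          Finset.sum_le_sum fun i _ => Finset.sum_le_sum fun j _ => step i j
      _ = W * W + ∑ i : Fin (N + 1), μ0.1 p.1 * (d i p.1).1 p.2 := by
          simp_rw [Finset.sum_add_distrib]
          rw [← Finset.sum_mul_sum]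
          congr 1
          exact Finset.sum_congr rfl fun i _ => by rw [Finset.sum_ite_eq]; simp
      _ ≤ W * W + c := by
          have : ∑ i : Fin (N + 1), μ0.1 p.1 * (d i p.1).1 p.2
              ≤ ∑ _i : Fin (N + 1), (1 : ℝ) :=
            Finset.sum_le_sum fun i _ => single_w_le_one μ0 d i p
          simp only [Finset.sum_const, Finset.card_univ, Fintype.card_fin, nsmul_eq_mul,
            mul_one] at this
          rw [hc]
          push_cast at this ⊢
          linarith
  -- expansion of the variance
  have expand : ∑ s : Fin (N + 1) → X × U,
      sampleWeight N μ0 d s * ((empDist N s).1 p - (jointG μ0 (avgRule N d)).1 p) ^ 2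
      = (∑ s : Fin (N + 1) → X × U, sampleWeight N μ0 d s * ((empDist N s).1 p) ^ 2)
        - (W / c) ^ 2 := by
    rw [hbW]
    have h1 : ∀ s : Fin (N + 1) → X × U,
        sampleWeight N μ0 d s * ((empDist N s).1 p - W / c) ^ 2
        = sampleWeight N μ0 d s * ((empDist N s).1 p) ^ 2
          - 2 * (W / c) * (sampleWeight N μ0 d s * (empDist N s).1 p)
          + (W / c) ^ 2 * sampleWeight N μ0 d s := by
      intro s; ring
    simp_rw [h1]
    rw [Finset.sum_add_distrib, Finset.sum_sub_distrib, ← Finset.mul_sum, ← Finset.mul_sum,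
      empExp_mean μ0 d p, hbW, sum_sampleWeight μ0 d]
    ring
  rw [expand, hE2]
  have key : (W * W + c) / c ^ 2 - (W / c) ^ 2 = 1 / c := by
    field_simp
    ring
  have h2 : (∑ i : Fin (N + 1), ∑ j : Fin (N + 1), if i = j then μ0.1 p.1 * (d i p.1).1 p.2
      else (μ0.1 p.1 * (d i p.1).1 p.2) * (μ0.1 p.1 * (d j p.1).1 p.2)) / c ^ 2
      ≤ (W * W + c) / c ^ 2 :=
    (div_le_div_iff_of_pos_right (by positivity)).mpr hD
  linarith [key, h2]


lemma empExp_close (f : ↥(stdSimplex ℝ (X × U)) → ℝ) (hf : Continuous f)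
    {δ : ℝ} (hδ : 0 < δ) :
    ∃ N0 : ℕ, ∀ N : ℕ, N0 ≤ N → ∀ d : Fin (N + 1) → X → ↥(stdSimplex ℝ U),
      |empExp N μ0 d f - f (jointG μ0 (avgRule N d))| ≤ δ := by
  haveI : CompactSpace ↥(stdSimplex ℝ (X × U)) :=
    isCompact_iff_compactSpace.mp (isCompact_stdSimplex _ _)
  obtain ⟨C, hC⟩ := (isCompact_univ (X := ↥(stdSimplex ℝ (X × U)))).exists_bound_of_continuousOn
    hf.continuousOn
  set M := max C 0 with hMdef
  have hM : ∀ G, |f G| ≤ M := fun G => le_trans (by simpa [Real.norm_eq_abs] using hC G trivial)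
    (le_max_left _ _)
  have hM0 : (0 : ℝ) ≤ M := le_max_right _ _
  have hu : UniformContinuous f := CompactSpace.uniformContinuous_of_continuous hf
  obtain ⟨η, hη, hmod⟩ := Metric.uniformContinuous_iff.mp hu (δ / 2) (by positivity)
  set K : ℝ := (Fintype.card (X × U) : ℝ) with hKdef
  have hK0 : (0 : ℝ) ≤ K := by positivity
  obtain ⟨N0, hN0⟩ := exists_nat_gt (2 * M * K / (η ^ 2 * (δ / 2)))
  refine ⟨N0, fun N hN d => ?_⟩
  set b := jointG μ0 (avgRule N d) with hbdef
  have hpt : ∀ s : Fin (N + 1) → X × U, |f (empDist N s) - f b|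
      ≤ δ / 2 + (2 * M / η ^ 2) * ∑ p : X × U, ((empDist N s).1 p - b.1 p) ^ 2 := by
    intro s
    have hsum0 : (0 : ℝ) ≤ ∑ p : X × U, ((empDist N s).1 p - b.1 p) ^ 2 :=
      Finset.sum_nonneg fun p _ => sq_nonneg _
    by_cases h : dist (empDist N s) b < η
    · have h1 := hmod h
      rw [Real.dist_eq] at h1
      have h3 : (0 : ℝ) ≤ (2 * M / η ^ 2) * ∑ p : X × U, ((empDist N s).1 p - b.1 p) ^ 2 :=
        mul_nonneg (by positivity) hsum0
      linarith
    · push_neg at h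
      have hex : ∃ p : X × U, η ≤ |(empDist N s).1 p - b.1 p| := by
        by_contra hcon
        push_neg at hcon
        have : dist (empDist N s) b < η := by
          rw [Subtype.dist_eq, dist_pi_lt_iff hη]
          intro p
          rw [Real.dist_eq]
          exact hcon p
        exact absurd this (not_lt.mpr h)
      obtain ⟨p, hp⟩ := hex
      have hsq : η ^ 2 ≤ ∑ q : X × U, ((empDist N s).1 q - b.1 q) ^ 2 := by
        have h1 : η ^ 2 ≤ ((empDist N s).1 p - b.1 p) ^ 2 := by
          have := sq_abs ((empDist N s).1 p - b.1 p)
          nlinarith [abs_nonneg ((empDist N s).1 p - b.1 p)]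
        exact h1.trans (Finset.single_le_sum
          (f := fun q : X × U => ((empDist N s).1 q - b.1 q) ^ 2)
          (fun q _ => sq_nonneg _) (Finset.mem_univ p))
      have h2 : |f (empDist N s) - f b| ≤ 2 * M := by
        rw [sub_eq_add_neg]
        refine (abs_add_le _ _).trans ?_
        rw [abs_neg]
        have := hM (empDist N s); have := hM b; linarith
      have h3 : 2 * M ≤ (2 * M / η ^ 2) * ∑ q : X × U, ((empDist N s).1 q - b.1 q) ^ 2 := by
        have hmul := mul_le_mul_of_nonneg_left hsq
          (show (0:ℝ) ≤ 2 * M / η ^ 2 by positivity)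
        have heq : (2 * M / η ^ 2) * η ^ 2 = 2 * M := by field_simp
        linarith
      linarith
  have e1 : empExp N μ0 d f - f b
      = ∑ s : Fin (N + 1) → X × U, sampleWeight N μ0 d s * (f (empDist N s) - f b) := by
    unfold empExp
    simp_rw [mul_sub]
    rw [Finset.sum_sub_distrib, ← Finset.sum_mul, sum_sampleWeight μ0 d, one_mul]
  have e2 : |empExp N μ0 d f - f b|
      ≤ ∑ s : Fin (N + 1) → X × U, sampleWeight N μ0 d s * |f (empDist N s) - f b| := by
    rw [e1]
    refine (Finset.abs_sum_le_sum_abs _ _).trans (Finset.sum_le_sum fun s _ => ?_)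
    rw [abs_mul, abs_of_nonneg (sampleWeight_nonneg μ0 d s)]
  have e3 : ∑ s : Fin (N + 1) → X × U, sampleWeight N μ0 d s * |f (empDist N s) - f b|
      ≤ ∑ s : Fin (N + 1) → X × U, sampleWeight N μ0 d s *
          (δ / 2 + (2 * M / η ^ 2) * ∑ p : X × U, ((empDist N s).1 p - b.1 p) ^ 2) :=
    Finset.sum_le_sum fun s _ =>
      mul_le_mul_of_nonneg_left (hpt s) (sampleWeight_nonneg μ0 d s)
  have e4 : ∑ s : Fin (N + 1) → X × U, sampleWeight N μ0 d s *
        (δ / 2 + (2 * M / η ^ 2) * ∑ p : X × U, ((empDist N s).1 p - b.1 p) ^ 2)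
      ≤ δ / 2 + (2 * M / η ^ 2) * (K * (1 / ((N : ℝ) + 1))) := by
    simp_rw [mul_add]
    rw [Finset.sum_add_distrib, ← Finset.sum_mul, sum_sampleWeight μ0 d, one_mul]
    have swap : ∑ s : Fin (N + 1) → X × U, sampleWeight N μ0 d s *
          ((2 * M / η ^ 2) * ∑ p : X × U, ((empDist N s).1 p - b.1 p) ^ 2)
        = (2 * M / η ^ 2) * ∑ p : X × U, ∑ s : Fin (N + 1) → X × U,
            sampleWeight N μ0 d s * ((empDist N s).1 p - b.1 p) ^ 2 := by
      simp_rw [Finset.mul_sum]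
      rw [Finset.sum_comm]
      exact Finset.sum_congr rfl fun p _ => Finset.sum_congr rfl fun s _ => by ring
    rw [swap]
    have hvar : ∑ p : X × U, ∑ s : Fin (N + 1) → X × U,
          sampleWeight N μ0 d s * ((empDist N s).1 p - b.1 p) ^ 2
        ≤ K * (1 / ((N : ℝ) + 1)) := by
      calc ∑ p : X × U, ∑ s : Fin (N + 1) → X × U,
            sampleWeight N μ0 d s * ((empDist N s).1 p - b.1 p) ^ 2
          ≤ ∑ _p : X × U, 1 / ((N : ℝ) + 1) :=
            Finset.sum_le_sum fun p _ => empExp_var μ0 d p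
        _ = K * (1 / ((N : ℝ) + 1)) := by
            rw [Finset.sum_const, Finset.card_univ, nsmul_eq_mul]
    have := mul_le_mul_of_nonneg_left hvar (by positivity : (0:ℝ) ≤ 2 * M / η ^ 2)
    linarith
  have etail : (2 * M / η ^ 2) * (K * (1 / ((N : ℝ) + 1))) ≤ δ / 2 := by
    have hNN : 2 * M * K / (η ^ 2 * (δ / 2)) < (N : ℝ) + 1 := by
      have : (N0 : ℝ) ≤ (N : ℝ) := Nat.cast_le.mpr hN
      linarith
    rw [div_lt_iff₀ (by positivity)] at hNN
    have heq : (2 * M / η ^ 2) * (K * (1 / ((N : ℝ) + 1)))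
        = 2 * M * K / (η ^ 2 * ((N : ℝ) + 1)) := by
      field_simp
    rw [heq, div_le_iff₀ (by positivity)]
    exact le_of_lt (lt_of_lt_of_eq hNN (by ring))
  calc |empExp N μ0 d f - f b| ≤ _ := e2
    _ ≤ _ := e3
    _ ≤ δ / 2 + (2 * M / η ^ 2) * (K * (1 / ((N : ℝ) + 1))) := e4
    _ ≤ δ / 2 + δ / 2 := by linarith [etail]
    _ = δ := by ring


lemma empExp_nonneg {N : ℕ} (d : Fin (N + 1) → X → ↥(stdSimplex ℝ U))
    (f : ↥(stdSimplex ℝ (X × U)) → ℝ) (hf : ∀ G, 0 ≤ f G) : 0 ≤ empExp N μ0 d f :=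
  Finset.sum_nonneg fun s _ => mul_nonneg (sampleWeight_nonneg μ0 d s) (hf _)

lemma empExp_abs_le {N : ℕ} (d : Fin (N + 1) → X → ↥(stdSimplex ℝ U))
    (f : ↥(stdSimplex ℝ (X × U)) → ℝ) {M : ℝ} (hf : ∀ G, |f G| ≤ M) :
    |empExp N μ0 d f| ≤ M := by
  refine (Finset.abs_sum_le_sum_abs _ _).trans ?_
  calc ∑ s : Fin (N + 1) → X × U, |sampleWeight N μ0 d s * f (empDist N s)|
      ≤ ∑ s : Fin (N + 1) → X × U, sampleWeight N μ0 d s * M := by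
        refine Finset.sum_le_sum fun s _ => ?_
        rw [abs_mul, abs_of_nonneg (sampleWeight_nonneg μ0 d s)]
        exact mul_le_mul_of_nonneg_left (hf _) (sampleWeight_nonneg μ0 d s)
    _ = M := by rw [← Finset.sum_mul, sum_sampleWeight μ0 d, one_mul]

lemma empExp_P0_sum {N : ℕ} (d : Fin (N + 1) → X → ↥(stdSimplex ℝ U))
    (P0 : X0 → ↥(stdSimplex ℝ (X × U)) → ↥(stdSimplex ℝ X0)) (x0 : X0) :
    ∑ y : X0, empExp N μ0 d (fun G => (P0 x0 G).1 y) = 1 := by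
  unfold empExp
  rw [Finset.sum_comm]
  have e : ∀ s : Fin (N + 1) → X × U,
      ∑ y : X0, sampleWeight N μ0 d s * (P0 x0 (empDist N s)).1 y
      = sampleWeight N μ0 d s := by
    intro s
    rw [← Finset.mul_sum, (P0 x0 (empDist N s)).2.2, mul_one]
  simp_rw [e]
  exact sum_sampleWeight μ0 d

lemma weighted_abs_le {M : ℝ} (ν : X0 → ℝ) (hν0 : ∀ x, 0 ≤ ν x) (hν1 : ∑ x, ν x = 1)
    (g : X0 → ℝ) (hg : ∀ x, |g x| ≤ M) : |∑ x, ν x * g x| ≤ M := by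
  refine (Finset.abs_sum_le_sum_abs _ _).trans ?_
  calc ∑ x, |ν x * g x| ≤ ∑ x, ν x * M := by
        refine Finset.sum_le_sum fun x _ => ?_
        rw [abs_mul, abs_of_nonneg (hν0 x)]
        exact mul_le_mul_of_nonneg_left (hg x) (hν0 x)
    _ = M := by rw [← Finset.sum_mul, hν1, one_mul]

variable (μ00 : ↥(stdSimplex ℝ X0))
variable (P0 : X0 → ↥(stdSimplex ℝ (X × U)) → ↥(stdSimplex ℝ X0))

lemma envLawN_nonneg {N : ℕ} (πv : Fin (N + 1) → ℕ → X0 → X → ↥(stdSimplex ℝ U)) :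
    ∀ t x0, 0 ≤ envLawN N μ0 μ00 P0 πv t x0 := by
  intro t
  induction t with
  | zero => exact fun x0 => μ00.2.1 x0
  | succ t ih =>
    intro y
    exact Finset.sum_nonneg fun x0 _ => mul_nonneg (ih x0)
      (empExp_nonneg μ0 _ _ fun G => (P0 x0 G).2.1 y)

lemma envLawN_sum {N : ℕ} (πv : Fin (N + 1) → ℕ → X0 → X → ↥(stdSimplex ℝ U)) (t : ℕ) :
    ∑ x0 : X0, envLawN N μ0 μ00 P0 πv t x0 = 1 := by
  induction t with
  | zero => exact μ00.2.2
  | succ t ih =>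
    show ∑ y : X0, ∑ x0 : X0, envLawN N μ0 μ00 P0 πv t x0 *
        empExp N μ0 (fun i => πv i t x0) (fun G => (P0 x0 G).1 y) = 1
    rw [Finset.sum_comm]
    have e : ∀ x0 : X0, ∑ y : X0, envLawN N μ0 μ00 P0 πv t x0 *
        empExp N μ0 (fun i => πv i t x0) (fun G => (P0 x0 G).1 y)
        = envLawN N μ0 μ00 P0 πv t x0 := by
      intro x0
      rw [← Finset.mul_sum, empExp_P0_sum μ0 _ P0 x0, mul_one]
    simp_rw [e]
    exact ih

lemma envLawMF_nonneg (π : ℕ → X0 → X → ↥(stdSimplex ℝ U)) :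
    ∀ t x0, 0 ≤ envLawMF μ0 μ00 P0 π t x0 := by
  intro t
  induction t with
  | zero => exact fun x0 => μ00.2.1 x0
  | succ t ih =>
    intro y
    exact Finset.sum_nonneg fun x0 _ => mul_nonneg (ih x0)
      ((P0 x0 (jointG μ0 (π t x0))).2.1 y)

lemma envLawMF_sum (π : ℕ → X0 → X → ↥(stdSimplex ℝ U)) (t : ℕ) :
    ∑ x0 : X0, envLawMF μ0 μ00 P0 π t x0 = 1 := by
  induction t with
  | zero => exact μ00.2.2
  | succ t ih =>
    show ∑ y : X0, ∑ x0 : X0, envLawMF μ0 μ00 P0 π t x0 *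
        (P0 x0 (jointG μ0 (π t x0))).1 y = 1
    rw [Finset.sum_comm]
    have e : ∀ x0 : X0, ∑ y : X0, envLawMF μ0 μ00 P0 π t x0 *
        (P0 x0 (jointG μ0 (π t x0))).1 y = envLawMF μ0 μ00 P0 π t x0 := by
      intro x0
      rw [← Finset.mul_sum, (P0 x0 (jointG μ0 (π t x0))).2.2, mul_one]
    simp_rw [e]
    exact ih

/-- Accumulated total-variation error between the `N`-agent environment law and the
mean-field environment law under the averaged policy. -/
lemma law_error {N : ℕ} (πv : Fin (N + 1) → ℕ → X0 → X → ↥(stdSimplex ℝ U)) {δ : ℝ}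
    (hδ0 : 0 ≤ δ)
    (hP : ∀ t x0 y, |empExp N μ0 (fun i => πv i t x0) (fun G => (P0 x0 G).1 y)
      - (P0 x0 (jointG μ0 (avgRule N (fun i => πv i t x0)))).1 y| ≤ δ) :
    ∀ t : ℕ, ∑ x0 : X0, |envLawN N μ0 μ00 P0 πv t x0
      - envLawMF μ0 μ00 P0 (fun t x0 => avgRule N (fun i => πv i t x0)) t x0|
      ≤ t * ((Fintype.card X0 : ℝ) * δ) := by
  set πb : ℕ → X0 → X → ↥(stdSimplex ℝ U) := fun t x0 => avgRule N (fun i => πv i t x0)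
    with hπb
  intro t
  induction t with
  | zero => simp [envLawN, envLawMF]
  | succ t ih =>
    have key : ∀ y : X0, |envLawN N μ0 μ00 P0 πv (t + 1) y
        - envLawMF μ0 μ00 P0 πb (t + 1) y|
        ≤ ∑ x0 : X0, (envLawN N μ0 μ00 P0 πv t x0 *
            |empExp N μ0 (fun i => πv i t x0) (fun G => (P0 x0 G).1 y)
              - (P0 x0 (jointG μ0 (πb t x0))).1 y|
          + |envLawN N μ0 μ00 P0 πv t x0 - envLawMF μ0 μ00 P0 πb t x0|
            * (P0 x0 (jointG μ0 (πb t x0))).1 y) := by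
      intro y
      have e1 : envLawN N μ0 μ00 P0 πv (t + 1) y - envLawMF μ0 μ00 P0 πb (t + 1) y
          = ∑ x0 : X0, (envLawN N μ0 μ00 P0 πv t x0 *
              (empExp N μ0 (fun i => πv i t x0) (fun G => (P0 x0 G).1 y)
                - (P0 x0 (jointG μ0 (πb t x0))).1 y)
            + (envLawN N μ0 μ00 P0 πv t x0 - envLawMF μ0 μ00 P0 πb t x0)
              * (P0 x0 (jointG μ0 (πb t x0))).1 y) := by
        show (∑ x0 : X0, envLawN N μ0 μ00 P0 πv t x0 *
            empExp N μ0 (fun i => πv i t x0) (fun G => (P0 x0 G).1 y))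
          - ∑ x0 : X0, envLawMF μ0 μ00 P0 πb t x0 * (P0 x0 (jointG μ0 (πb t x0))).1 y = _
        rw [← Finset.sum_sub_distrib]
        exact Finset.sum_congr rfl fun x0 _ => by ring
      rw [e1]
      refine (Finset.abs_sum_le_sum_abs _ _).trans (Finset.sum_le_sum fun x0 _ => ?_)
      refine (abs_add_le _ _).trans ?_
      rw [abs_mul, abs_mul, abs_of_nonneg (envLawN_nonneg μ0 μ00 P0 πv t x0),
        abs_of_nonneg ((P0 x0 (jointG μ0 (πb t x0))).2.1 y)]
    calc ∑ y : X0, |envLawN N μ0 μ00 P0 πv (t + 1) y - envLawMF μ0 μ00 P0 πb (t + 1) y|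
        ≤ ∑ y : X0, ∑ x0 : X0, (envLawN N μ0 μ00 P0 πv t x0 *
              |empExp N μ0 (fun i => πv i t x0) (fun G => (P0 x0 G).1 y)
                - (P0 x0 (jointG μ0 (πb t x0))).1 y|
            + |envLawN N μ0 μ00 P0 πv t x0 - envLawMF μ0 μ00 P0 πb t x0|
              * (P0 x0 (jointG μ0 (πb t x0))).1 y) :=
          Finset.sum_le_sum fun y _ => key y
      _ = (∑ x0 : X0, envLawN N μ0 μ00 P0 πv t x0 *
              ∑ y : X0, |empExp N μ0 (fun i => πv i t x0) (fun G => (P0 x0 G).1 y)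
                - (P0 x0 (jointG μ0 (πb t x0))).1 y|)
          + ∑ x0 : X0, |envLawN N μ0 μ00 P0 πv t x0 - envLawMF μ0 μ00 P0 πb t x0|
              * ∑ y : X0, (P0 x0 (jointG μ0 (πb t x0))).1 y := by
          rw [Finset.sum_comm]
          rw [← Finset.sum_add_distrib]
          refine Finset.sum_congr rfl fun x0 _ => ?_
          rw [Finset.sum_add_distrib, ← Finset.mul_sum, ← Finset.mul_sum]
      _ ≤ (Fintype.card X0 : ℝ) * δ + t * ((Fintype.card X0 : ℝ) * δ) := by
          have h1 : (∑ x0 : X0, envLawN N μ0 μ00 P0 πv t x0 *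
              ∑ y : X0, |empExp N μ0 (fun i => πv i t x0) (fun G => (P0 x0 G).1 y)
                - (P0 x0 (jointG μ0 (πb t x0))).1 y|)
              ≤ (Fintype.card X0 : ℝ) * δ := by
            calc (∑ x0 : X0, envLawN N μ0 μ00 P0 πv t x0 *
                ∑ y : X0, |empExp N μ0 (fun i => πv i t x0) (fun G => (P0 x0 G).1 y)
                  - (P0 x0 (jointG μ0 (πb t x0))).1 y|)
                ≤ ∑ x0 : X0, envLawN N μ0 μ00 P0 πv t x0 * ((Fintype.card X0 : ℝ) * δ) := by
                  refine Finset.sum_le_sum fun x0 _ => ?_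
                  refine mul_le_mul_of_nonneg_left ?_ (envLawN_nonneg μ0 μ00 P0 πv t x0)
                  calc ∑ y : X0, |empExp N μ0 (fun i => πv i t x0) (fun G => (P0 x0 G).1 y)
                      - (P0 x0 (jointG μ0 (πb t x0))).1 y|
                      ≤ ∑ _y : X0, δ := Finset.sum_le_sum fun y _ => hP t x0 y
                    _ = (Fintype.card X0 : ℝ) * δ := by
                        rw [Finset.sum_const, Finset.card_univ, nsmul_eq_mul]
              _ = (Fintype.card X0 : ℝ) * δ := by
                  rw [← Finset.sum_mul, envLawN_sum μ0 μ00 P0 πv t, one_mul]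
          have h2 : ∑ x0 : X0, |envLawN N μ0 μ00 P0 πv t x0 - envLawMF μ0 μ00 P0 πb t x0|
              * ∑ y : X0, (P0 x0 (jointG μ0 (πb t x0))).1 y
              ≤ t * ((Fintype.card X0 : ℝ) * δ) := by
            have e : ∀ x0 : X0, |envLawN N μ0 μ00 P0 πv t x0 - envLawMF μ0 μ00 P0 πb t x0|
                * ∑ y : X0, (P0 x0 (jointG μ0 (πb t x0))).1 y
                = |envLawN N μ0 μ00 P0 πv t x0 - envLawMF μ0 μ00 P0 πb t x0| := by
              intro x0
              rw [(P0 x0 (jointG μ0 (πb t x0))).2.2, mul_one]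
            simp_rw [e]
            exact ih
          linarith
      _ = (t + 1 : ℕ) * ((Fintype.card X0 : ℝ) * δ) := by push_cast; ring


lemma JMF_le {γ : ℝ} (hγ : γ ∈ Set.Ioo (0:ℝ) 1) (r : X0 → ↥(stdSimplex ℝ (X × U)) → ℝ)
    {Mr : ℝ} (hMr : ∀ x0 G, |r x0 G| ≤ Mr) (π : ℕ → X0 → X → ↥(stdSimplex ℝ U)) :
    JMF μ0 μ00 P0 r γ π ≤ (1 - γ)⁻¹ * Mr := by
  have hB : ∀ t : ℕ, |∑ x0 : X0, envLawMF μ0 μ00 P0 π t x0 * r x0 (jointG μ0 (π t x0))| ≤ Mr :=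
    fun t => weighted_abs_le _ (envLawMF_nonneg μ0 μ00 P0 π t) (envLawMF_sum μ0 μ00 P0 π t)
      _ (fun x0 => hMr x0 _)
  have hgsum : Summable (fun t : ℕ => γ ^ t) := summable_geometric_of_lt_one hγ.1.le hγ.2
  have hsum : Summable (fun t : ℕ => γ ^ t *
      ∑ x0 : X0, envLawMF μ0 μ00 P0 π t x0 * r x0 (jointG μ0 (π t x0))) := by
    refine Summable.of_norm_bounded (hgsum.mul_right Mr) fun t => ?_
    rw [Real.norm_eq_abs, abs_mul, abs_of_nonneg (pow_nonneg hγ.1.le t)]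
    exact mul_le_mul_of_nonneg_left (hB t) (pow_nonneg hγ.1.le t)
  calc JMF μ0 μ00 P0 r γ π ≤ ∑' t : ℕ, γ ^ t * Mr := by
        refine Summable.tsum_le_tsum (fun t => ?_) hsum (hgsum.mul_right Mr)
        exact mul_le_mul_of_nonneg_left ((le_abs_self _).trans (hB t)) (pow_nonneg hγ.1.le t)
    _ = (1 - γ)⁻¹ * Mr := by
        rw [tsum_mul_right, tsum_geometric_of_lt_one hγ.1.le hγ.2]

lemma J_compare {γ : ℝ} (hγ : γ ∈ Set.Ioo (0:ℝ) 1) (r : X0 → ↥(stdSimplex ℝ (X × U)) → ℝ)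
    {Mr : ℝ} (hMr0 : 0 ≤ Mr) (hMr : ∀ x0 G, |r x0 G| ≤ Mr)
    {N : ℕ} (πv : Fin (N + 1) → ℕ → X0 → X → ↥(stdSimplex ℝ U)) {δ : ℝ} (hδ0 : 0 ≤ δ)
    (hP : ∀ t x0 y, |empExp N μ0 (fun i => πv i t x0) (fun G => (P0 x0 G).1 y)
      - (P0 x0 (jointG μ0 (avgRule N (fun i => πv i t x0)))).1 y| ≤ δ)
    (hre : ∀ t x0, |empExp N μ0 (fun i => πv i t x0) (fun G => r x0 G)
      - r x0 (jointG μ0 (avgRule N (fun i => πv i t x0)))| ≤ δ) :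
    |JN N μ0 μ00 P0 r γ πv
        - JMF μ0 μ00 P0 r γ (fun t x0 => avgRule N (fun i => πv i t x0))|
      ≤ δ * ∑' t : ℕ, γ ^ t * (1 + Mr * (Fintype.card X0 : ℝ) * t) := by
  set πb : ℕ → X0 → X → ↥(stdSimplex ℝ U) := fun t x0 => avgRule N (fun i => πv i t x0)
    with hπb
  set K0 : ℝ := (Fintype.card X0 : ℝ) with hK0
  have hK00 : (0:ℝ) ≤ K0 := by positivity
  set A : ℕ → ℝ := fun t => ∑ x0 : X0, envLawN N μ0 μ00 P0 πv t x0 *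
      empExp N μ0 (fun i => πv i t x0) (fun G => r x0 G) with hA
  set B : ℕ → ℝ := fun t => ∑ x0 : X0, envLawMF μ0 μ00 P0 πb t x0 *
      r x0 (jointG μ0 (πb t x0)) with hB
  have hAle : ∀ t, |A t| ≤ Mr := fun t =>
    weighted_abs_le _ (envLawN_nonneg μ0 μ00 P0 πv t) (envLawN_sum μ0 μ00 P0 πv t) _
      (fun x0 => empExp_abs_le μ0 _ _ (fun G => hMr x0 G))
  have hBle : ∀ t, |B t| ≤ Mr := fun t =>
    weighted_abs_le _ (envLawMF_nonneg μ0 μ00 P0 πb t) (envLawMF_sum μ0 μ00 P0 πb t) _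
      (fun x0 => hMr x0 _)
  have hAB : ∀ t, |A t - B t| ≤ δ * (1 + Mr * K0 * t) := by
    intro t
    have e1 : A t - B t = ∑ x0 : X0, (envLawN N μ0 μ00 P0 πv t x0 *
        (empExp N μ0 (fun i => πv i t x0) (fun G => r x0 G) - r x0 (jointG μ0 (πb t x0)))
      + (envLawN N μ0 μ00 P0 πv t x0 - envLawMF μ0 μ00 P0 πb t x0)
        * r x0 (jointG μ0 (πb t x0))) := by
      rw [hA, hB, ← Finset.sum_sub_distrib]
      exact Finset.sum_congr rfl fun x0 _ => by ring
    rw [e1]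
    refine (Finset.abs_sum_le_sum_abs _ _).trans ?_
    have step : ∀ x0 : X0, |envLawN N μ0 μ00 P0 πv t x0 *
        (empExp N μ0 (fun i => πv i t x0) (fun G => r x0 G) - r x0 (jointG μ0 (πb t x0)))
      + (envLawN N μ0 μ00 P0 πv t x0 - envLawMF μ0 μ00 P0 πb t x0)
        * r x0 (jointG μ0 (πb t x0))|
        ≤ envLawN N μ0 μ00 P0 πv t x0 * δ
          + |envLawN N μ0 μ00 P0 πv t x0 - envLawMF μ0 μ00 P0 πb t x0| * Mr := by
      intro x0
      refine (abs_add_le _ _).trans ?_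
      rw [abs_mul, abs_mul, abs_of_nonneg (envLawN_nonneg μ0 μ00 P0 πv t x0)]
      have g1 := mul_le_mul_of_nonneg_left (hre t x0) (envLawN_nonneg μ0 μ00 P0 πv t x0)
      have g2 := mul_le_mul_of_nonneg_left (hMr x0 (jointG μ0 (πb t x0))) (abs_nonneg
        (envLawN N μ0 μ00 P0 πv t x0 - envLawMF μ0 μ00 P0 πb t x0))
      linarith
    calc ∑ x0 : X0, |envLawN N μ0 μ00 P0 πv t x0 *
        (empExp N μ0 (fun i => πv i t x0) (fun G => r x0 G) - r x0 (jointG μ0 (πb t x0)))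
      + (envLawN N μ0 μ00 P0 πv t x0 - envLawMF μ0 μ00 P0 πb t x0)
        * r x0 (jointG μ0 (πb t x0))|
        ≤ ∑ x0 : X0, (envLawN N μ0 μ00 P0 πv t x0 * δ
          + |envLawN N μ0 μ00 P0 πv t x0 - envLawMF μ0 μ00 P0 πb t x0| * Mr) :=
          Finset.sum_le_sum fun x0 _ => step x0
      _ ≤ δ + (t * (K0 * δ)) * Mr := by
          rw [Finset.sum_add_distrib, ← Finset.sum_mul, ← Finset.sum_mul,
            envLawN_sum μ0 μ00 P0 πv t, one_mul]
          have := mul_le_mul_of_nonneg_right (law_error μ0 μ00 P0 πv hδ0 hP t) hMr0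
          linarith
      _ ≤ δ * (1 + Mr * K0 * t) := by nlinarith [Nat.cast_nonneg (α := ℝ) t]
  have hgsum : Summable (fun t : ℕ => γ ^ t) := summable_geometric_of_lt_one hγ.1.le hγ.2
  have htsum : Summable (fun t : ℕ => (t : ℝ) * γ ^ t) := by
    have := summable_pow_mul_geometric_of_norm_lt_one 1
      (by rw [Real.norm_eq_abs, abs_of_pos hγ.1]; exact hγ.2)
    simpa using this
  have hbnd : Summable (fun t : ℕ => γ ^ t * (1 + Mr * K0 * t)) := by
    refine (hgsum.add (htsum.mul_left (Mr * K0))).congr fun t => ?_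
    ring
  have hJNs : Summable (fun t : ℕ => γ ^ t * A t) := by
    refine Summable.of_norm_bounded (hgsum.mul_right Mr) fun t => ?_
    rw [Real.norm_eq_abs, abs_mul, abs_of_nonneg (pow_nonneg hγ.1.le t)]
    exact mul_le_mul_of_nonneg_left (hAle t) (pow_nonneg hγ.1.le t)
  have hJMFs : Summable (fun t : ℕ => γ ^ t * B t) := by
    refine Summable.of_norm_bounded (hgsum.mul_right Mr) fun t => ?_
    rw [Real.norm_eq_abs, abs_mul, abs_of_nonneg (pow_nonneg hγ.1.le t)]
    exact mul_le_mul_of_nonneg_left (hBle t) (pow_nonneg hγ.1.le t)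
  have hdiff : JN N μ0 μ00 P0 r γ πv - JMF μ0 μ00 P0 r γ πb
      = ∑' t : ℕ, γ ^ t * (A t - B t) := by
    rw [show JN N μ0 μ00 P0 r γ πv = ∑' t : ℕ, γ ^ t * A t from rfl,
      show JMF μ0 μ00 P0 r γ πb = ∑' t : ℕ, γ ^ t * B t from rfl,
      ← Summable.tsum_sub hJNs hJMFs]
    exact tsum_congr fun t => by ring
  rw [hdiff]
  have hsub : Summable (fun t : ℕ => γ ^ t * (A t - B t)) :=
    (hJNs.sub hJMFs).congr fun t => by ring
  have habs : Summable (fun t : ℕ => ‖γ ^ t * (A t - B t)‖) :=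
    hsub.abs.congr fun t => (Real.norm_eq_abs _).symm
  calc |∑' t : ℕ, γ ^ t * (A t - B t)| ≤ ∑' t : ℕ, |γ ^ t * (A t - B t)| := by
        rw [show |∑' t : ℕ, γ ^ t * (A t - B t)| = ‖∑' t : ℕ, γ ^ t * (A t - B t)‖ from rfl]
        exact (norm_tsum_le_tsum_norm habs).trans_eq (tsum_congr fun t => rfl)
    _ ≤ ∑' t : ℕ, δ * (γ ^ t * (1 + Mr * K0 * t)) := by
        refine Summable.tsum_le_tsum (fun t => ?_) hsub.abs (hbnd.mul_left δ)
        rw [abs_mul, abs_of_nonneg (pow_nonneg hγ.1.le t)]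
        calc γ ^ t * |A t - B t| ≤ γ ^ t * (δ * (1 + Mr * K0 * t)) :=
              mul_le_mul_of_nonneg_left (hAB t) (pow_nonneg hγ.1.le t)
          _ = δ * (γ ^ t * (1 + Mr * K0 * t)) := by ring
    _ = δ * ∑' t : ℕ, γ ^ t * (1 + Mr * K0 * t) := tsum_mul_left

end Aux


/-- Under the continuity assumption on `r` and `P⁰`, for every `ε > 0` there
exists `N(ε)` such that for all `N > N(ε)`, any mean-field policy `π*` optimal for the
mean-field control problem (i.e. `J(π*) = sup_{π∈Π} J(π)`) is `ε`-Pareto optimal in the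
`N`-agent problem: `J^N(π^N(π*)) ≥ sup_{(π¹,…,πᴺ) ∈ Π_N^N} J^N(π¹,…,πᴺ) − ε`.
(The number of agents is written as `N + 1`; this only relabels `N(ε)`.) -/
theorem mean_field_optimal_policy_approximately_pareto_optimal
    {X U X0 : Type*} [Fintype X] [Fintype U] [Fintype X0]
    [Nonempty X] [Nonempty U] [Nonempty X0] [DecidableEq X] [DecidableEq U]
    (μ0 : ↥(stdSimplex ℝ X)) (μ00 : ↥(stdSimplex ℝ X0))
    (P0 : X0 → ↥(stdSimplex ℝ (X × U)) → ↥(stdSimplex ℝ X0))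
    (r : X0 → ↥(stdSimplex ℝ (X × U)) → ℝ)
    (γ : ℝ) (hγ : γ ∈ Set.Ioo (0 : ℝ) 1)
    -- Assumption 1: continuity of r and P⁰ in the state-action distribution
    (hr : ∀ x0, Continuous (r x0)) (hP0 : ∀ x0, Continuous (P0 x0)) :
    ∀ ε : ℝ, 0 < ε → ∃ Nε : ℕ, ∀ N : ℕ, Nε < N →
      ∀ πstar : ℕ → X0 → X → ↥(stdSimplex ℝ U),
        JMF μ0 μ00 P0 r γ πstar
          = (⨆ π : ℕ → X0 → X → ↥(stdSimplex ℝ U), JMF μ0 μ00 P0 r γ π) →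
        JN N μ0 μ00 P0 r γ (fun _ => πstar)
          ≥ (⨆ πv : Fin (N + 1) → ℕ → X0 → X → ↥(stdSimplex ℝ U),
              JN N μ0 μ00 P0 r γ πv) - ε := by
  intro ε hε
  haveI : CompactSpace ↥(stdSimplex ℝ (X × U)) :=
    isCompact_iff_compactSpace.mp (isCompact_stdSimplex _ _)
  -- a uniform bound on the reward
  have hbound : ∀ x0 : X0, ∃ C : ℝ, ∀ G, |r x0 G| ≤ C := by
    intro x0
    obtain ⟨C, hC⟩ := (isCompact_univ
      (X := ↥(stdSimplex ℝ (X × U)))).exists_bound_of_continuousOn (hr x0).continuousOn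
    exact ⟨C, fun G => by simpa [Real.norm_eq_abs] using hC G trivial⟩
  choose Cf hCf using hbound
  set Mr : ℝ := max 0 (Finset.univ.sup' Finset.univ_nonempty Cf) with hMrdef
  have hMr : ∀ x0 G, |r x0 G| ≤ Mr := fun x0 G => (hCf x0 G).trans
    ((Finset.le_sup' Cf (Finset.mem_univ x0)).trans (le_max_right _ _))
  have hMr0 : (0:ℝ) ≤ Mr := le_max_left _ _
  set K0 : ℝ := (Fintype.card X0 : ℝ) with hK0def
  set Cb : ℝ := ∑' t : ℕ, γ ^ t * (1 + Mr * K0 * t) with hCbdef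
  have hCb0 : (0:ℝ) ≤ Cb := tsum_nonneg fun t =>
    mul_nonneg (pow_nonneg hγ.1.le t) (by positivity)
  set δ : ℝ := ε / (2 * (Cb + 1)) with hδdef
  have hδ : 0 < δ := by rw [hδdef]; positivity
  -- closeness thresholds
  choose N1 hN1 using fun x0 : X0 => empExp_close μ0 (r x0) (hr x0) hδ
  choose N2 hN2 using fun q : X0 × X0 => empExp_close μ0 (fun G => (P0 q.1 G).1 q.2)
    ((continuous_apply q.2).comp (continuous_subtype_val.comp (hP0 q.1))) hδ
  refine ⟨(Finset.univ.sup N1) ⊔ (Finset.univ.sup N2), fun N hN πstar hopt => ?_⟩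
  have hNr : ∀ x0, N1 x0 ≤ N := fun x0 =>
    ((Finset.le_sup (Finset.mem_univ x0)).trans le_sup_left).trans hN.le
  have hNP : ∀ q : X0 × X0, N2 q ≤ N := fun q =>
    ((Finset.le_sup (Finset.mem_univ q)).trans le_sup_right).trans hN.le
  -- uniform objective comparison
  have hcomp : ∀ πv : Fin (N + 1) → ℕ → X0 → X → ↥(stdSimplex ℝ U),
      |JN N μ0 μ00 P0 r γ πv
        - JMF μ0 μ00 P0 r γ (fun t x0 => avgRule N (fun i => πv i t x0))| ≤ δ * Cb := by
    intro πv
    refine J_compare μ0 μ00 P0 hγ r hMr0 hMr πv hδ.le ?_ ?_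
    · intro t x0 y; exact hN2 (x0, y) N (hNP (x0, y)) _
    · intro t x0; exact hN1 x0 N (hNr x0) _
  have hJMFbdd : BddAbove (Set.range fun π : ℕ → X0 → X → ↥(stdSimplex ℝ U) =>
      JMF μ0 μ00 P0 r γ π) := by
    refine ⟨(1 - γ)⁻¹ * Mr, ?_⟩
    rintro v ⟨π, rfl⟩
    exact JMF_le μ0 μ00 P0 hγ r hMr π
  haveI hUne : Nonempty ↥(stdSimplex ℝ U) :=
    ⟨⟨fun u => if u = Classical.arbitrary U then 1 else 0,
      fun u => by positivity, by simp⟩⟩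
  have h1 : ∀ πv : Fin (N + 1) → ℕ → X0 → X → ↥(stdSimplex ℝ U),
      JN N μ0 μ00 P0 r γ πv ≤ JMF μ0 μ00 P0 r γ πstar + δ * Cb := by
    intro πv
    have h2 := (abs_le.mp (hcomp πv)).2
    have h3 : JMF μ0 μ00 P0 r γ (fun t x0 => avgRule N (fun i => πv i t x0))
        ≤ JMF μ0 μ00 P0 r γ πstar := by
      rw [hopt]
      exact le_ciSup hJMFbdd _
    linarith
  have h4 : (⨆ πv : Fin (N + 1) → ℕ → X0 → X → ↥(stdSimplex ℝ U),
      JN N μ0 μ00 P0 r γ πv) ≤ JMF μ0 μ00 P0 r γ πstar + δ * Cb := ciSup_le h1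
  have hconst : (fun t x0 => avgRule N
      (fun i => (fun _ : Fin (N + 1) => πstar) i t x0)) = πstar := by
    funext t x0
    funext x
    apply Subtype.ext
    funext u
    show (∑ _i : Fin (N + 1), (πstar t x0 x).1 u) / ((N : ℝ) + 1) = (πstar t x0 x).1 u
    rw [Finset.sum_const, Finset.card_univ, Fintype.card_fin, nsmul_eq_mul,
      Nat.cast_add, Nat.cast_one]
    field_simp
  have h5 := hcomp (fun _ => πstar)
  rw [hconst] at h5
  have h6 : δ * Cb ≤ ε / 2 := by
    rw [hδdef, div_mul_eq_mul_div, div_le_iff₀ (by positivity)]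
    nlinarith
  have h7 := (abs_le.mp h5).1
  linarith
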